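/- Let ζ, η ∈ ℂ with S₁ ≠ S₂ the roots of S² − ηS − ζ − 2 = 0, and φ₁, φ₂ the associated Fibonacci-type sequences (φ_l(j+1) = S_l φ_l(j) − φ_l(j−1), φ_l(0)=0, φ_l(1)=1). Then any solution ξ of the symmetric Tetranacci recursion with initial values g_{−2},…,g_1 satisfies, for all j ∈ ℤ: ξ_j = φ₂(j)·(g_{−2} − S₁g_{−1} + g_0)/(S₁−S₂) − φ₁(j)·(g_{−2} − S₂g_{−1} + g_0)/(S₁−S₂) + φ₁(j+1)·(g_{−1} − S₂g_0 + g_1)/(S₁−S₂) − φ₂(j+1)·(g_{−1} − S₁g_0 + g_1)/(S₁−S₂). -/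

import Mathlib

private lemma tetra_unique (ζ η : ℂ) (a b : ℤ → ℂ)
    (ha : ∀ j : ℤ, a (j + 2) = ζ * a j - a (j - 2) + η * (a (j + 1) + a (j - 1)))
    (hb : ∀ j : ℤ, b (j + 2) = ζ * b j - b (j - 2) + η * (b (j + 1) + b (j - 1)))
    (hm2 : a (-2) = b (-2)) (hm1 : a (-1) = b (-1))
    (h0 : a 0 = b 0) (h1 : a 1 = b 1) :
    ∀ j : ℤ, a j = b j := by
  have Q : ∀ n : ℤ, a (n - 2) = b (n - 2) ∧ a (n - 1) = b (n - 1) ∧ a n = b n ∧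
      a (n + 1) = b (n + 1) := by
    have step : ∀ n : ℤ, (a (n - 2) = b (n - 2) ∧ a (n - 1) = b (n - 1) ∧ a n = b n ∧
        a (n + 1) = b (n + 1)) → (a (n + 1 - 2) = b (n + 1 - 2) ∧ a (n + 1 - 1) = b (n + 1 - 1)
        ∧ a (n + 1) = b (n + 1) ∧ a (n + 1 + 1) = b (n + 1 + 1)) := by
      rintro n ⟨e1, e2, e3, e4⟩
      have e5 : a (n + 2) = b (n + 2) := by
        rw [ha n, hb n, e1, e2, e3, e4]
      refine ⟨?_, ?_, e4, ?_⟩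
      · rw [show n + 1 - 2 = n - 1 by ring]; exact e2
      · rw [show n + 1 - 1 = n by ring]; exact e3
      · rw [show n + 1 + 1 = n + 2 by ring]; exact e5
    have stepdown : ∀ n : ℤ, (a (n - 2) = b (n - 2) ∧ a (n - 1) = b (n - 1) ∧ a n = b n ∧
        a (n + 1) = b (n + 1)) → (a (n - 1 - 2) = b (n - 1 - 2) ∧ a (n - 1 - 1) = b (n - 1 - 1)
        ∧ a (n - 1) = b (n - 1) ∧ a (n - 1 + 1) = b (n - 1 + 1)) := by
      rintro n ⟨e1, e2, e3, e4⟩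
      have Ha := ha (n - 1)
      have Hb := hb (n - 1)
      rw [show n - 1 + 2 = n + 1 by ring, show n - 1 - 2 = n - 3 by ring,
        show n - 1 + 1 = n by ring, show n - 1 - 1 = n - 2 by ring] at Ha Hb
      have e0 : a (n - 3) = b (n - 3) := by
        linear_combination Ha - Hb - e4 + ζ * e2 + η * e3 + η * e1
      refine ⟨?_, ?_, e2, ?_⟩
      · rw [show n - 1 - 2 = n - 3 by ring]; exact e0
      · rw [show n - 1 - 1 = n - 2 by ring]; exact e1
      · rw [show n - 1 + 1 = n by ring]; exact e3
    intro n
    induction n using Int.induction_on with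
    | zero => norm_num [hm2, hm1, h0, h1]
    | succ k ih => exact step k ih
    | pred k ih => exact stepdown (-k) ih
  intro j
  exact (Q j).2.2.1

private lemma tetra_rec (ζ η S₁ S₂ : ℂ)
    (hS₁ : S₁ ^ 2 - η * S₁ - ζ - 2 = 0) (hS₂ : S₂ ^ 2 - η * S₂ - ζ - 2 = 0)
    (φ₁ φ₂ : ℤ → ℂ)
    (hrec₁ : ∀ j : ℤ, φ₁ (j + 1) = S₁ * φ₁ j - φ₁ (j - 1))
    (hrec₂ : ∀ j : ℤ, φ₂ (j + 1) = S₂ * φ₂ j - φ₂ (j - 1))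
    (A B C D : ℂ) (F : ℤ → ℂ)
    (hF : ∀ j : ℤ, F j = φ₂ j * A - φ₁ j * B + φ₁ (j + 1) * C - φ₂ (j + 1) * D) :
    ∀ j : ℤ, F (j + 2) = ζ * F j - F (j - 2) + η * (F (j + 1) + F (j - 1)) := by
  intro j
  rw [hF (j + 2), hF j, hF (j - 2), hF (j + 1), hF (j - 1)]
  rw [show j + 2 + 1 = j + 3 by ring, show j + 1 + 1 = j + 2 by ring,
    show j - 1 + 1 = j by ring, show j - 2 + 1 = j - 1 by ring]
  have p1 := hrec₁ j
  have p2 : φ₁ (j + 2) = S₁ * φ₁ (j + 1) - φ₁ j := by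
    have := hrec₁ (j + 1)
    rwa [show j + 1 + 1 = j + 2 by ring, show j + 1 - 1 = j by ring] at this
  have p3 : φ₁ (j + 3) = S₁ * φ₁ (j + 2) - φ₁ (j + 1) := by
    have := hrec₁ (j + 2)
    rwa [show j + 2 + 1 = j + 3 by ring, show j + 2 - 1 = j + 1 by ring] at this
  have p4 : φ₁ (j - 2) = S₁ * φ₁ (j - 1) - φ₁ j := by
    have := hrec₁ (j - 1)
    rw [show j - 1 + 1 = j by ring, show j - 1 - 1 = j - 2 by ring] at this
    linear_combination this
  have q1 := hrec₂ j
  have q2 : φ₂ (j + 2) = S₂ * φ₂ (j + 1) - φ₂ j := by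
    have := hrec₂ (j + 1)
    rwa [show j + 1 + 1 = j + 2 by ring, show j + 1 - 1 = j by ring] at this
  have q3 : φ₂ (j + 3) = S₂ * φ₂ (j + 2) - φ₂ (j + 1) := by
    have := hrec₂ (j + 2)
    rwa [show j + 2 + 1 = j + 3 by ring, show j + 2 - 1 = j + 1 by ring] at this
  have q4 : φ₂ (j - 2) = S₂ * φ₂ (j - 1) - φ₂ j := by
    have := hrec₂ (j - 1)
    rw [show j - 1 + 1 = j by ring, show j - 1 - 1 = j - 2 by ring] at this
    linear_combination this
  rw [p3, q3, p2, q2, p1, q1, p4, q4]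
  linear_combination (C * (S₁ * φ₁ j - φ₁ (j - 1)) - B * φ₁ j) * hS₁ +
    (A * φ₂ j - D * (S₂ * φ₂ j - φ₂ (j - 1))) * hS₂

theorem tetranacci_full_fibonacci_decomposition (ζ η S₁ S₂ : ℂ)
    (hS₁ : S₁ ^ 2 - η * S₁ - ζ - 2 = 0) (hS₂ : S₂ ^ 2 - η * S₂ - ζ - 2 = 0)
    (hne : S₁ ≠ S₂)
    (φ₁ φ₂ : ℤ → ℂ)
    (hrec₁ : ∀ j : ℤ, φ₁ (j + 1) = S₁ * φ₁ j - φ₁ (j - 1))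
    (h10 : φ₁ 0 = 0) (h11 : φ₁ 1 = 1)
    (hrec₂ : ∀ j : ℤ, φ₂ (j + 1) = S₂ * φ₂ j - φ₂ (j - 1))
    (h20 : φ₂ 0 = 0) (h21 : φ₂ 1 = 1)
    (ξ : ℤ → ℂ)
    (hrec : ∀ j : ℤ, ξ (j + 2) = ζ * ξ j - ξ (j - 2) + η * (ξ (j + 1) + ξ (j - 1))) :
    ∀ j : ℤ, ξ j =
      φ₂ j * ((ξ (-2) - S₁ * ξ (-1) + ξ 0) / (S₁ - S₂)) -
      φ₁ j * ((ξ (-2) - S₂ * ξ (-1) + ξ 0) / (S₁ - S₂)) +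
      φ₁ (j + 1) * ((ξ (-1) - S₂ * ξ 0 + ξ 1) / (S₁ - S₂)) -
      φ₂ (j + 1) * ((ξ (-1) - S₁ * ξ 0 + ξ 1) / (S₁ - S₂)) := by
  have hd : S₁ - S₂ ≠ 0 := sub_ne_zero_of_ne hne
  -- φ values at small indices
  have m11 : φ₁ (-1) = -1 := by
    have := hrec₁ 0
    norm_num [h10, h11] at this
    linear_combination this
  have m21 : φ₂ (-1) = -1 := by
    have := hrec₂ 0
    norm_num [h20, h21] at this
    linear_combination this
  have m12 : φ₁ (-2) = -S₁ := by
    have := hrec₁ (-1)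
    norm_num [h10, m11] at this
    linear_combination this
  have m22 : φ₂ (-2) = -S₂ := by
    have := hrec₂ (-1)
    norm_num [h20, m21] at this
    linear_combination this
  have t1 : φ₁ 2 = S₁ := by
    have := hrec₁ 1
    norm_num [h10, h11] at this
    exact this
  have t2 : φ₂ 2 = S₂ := by
    have := hrec₂ 1
    norm_num [h20, h21] at this
    exact this
  set A := (ξ (-2) - S₁ * ξ (-1) + ξ 0) / (S₁ - S₂) with hA
  set B := (ξ (-2) - S₂ * ξ (-1) + ξ 0) / (S₁ - S₂) with hB
  set C := (ξ (-1) - S₂ * ξ 0 + ξ 1) / (S₁ - S₂) with hC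
  set D := (ξ (-1) - S₁ * ξ 0 + ξ 1) / (S₁ - S₂) with hD
  have frec := tetra_rec ζ η S₁ S₂ hS₁ hS₂ φ₁ φ₂ hrec₁ hrec₂ A B C D
    (fun j => φ₂ j * A - φ₁ j * B + φ₁ (j + 1) * C - φ₂ (j + 1) * D) (fun j => rfl)
  refine tetra_unique ζ η ξ
    (fun j => φ₂ j * A - φ₁ j * B + φ₁ (j + 1) * C - φ₂ (j + 1) * D) hrec frec ?_ ?_ ?_ ?_
  · show ξ (-2) = φ₂ (-2) * A - φ₁ (-2) * B + φ₁ (-2 + 1) * C - φ₂ (-2 + 1) * D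
    norm_num [m11, m21, m12, m22, hA, hB, hC, hD]
    field_simp
    ring
  · show ξ (-1) = φ₂ (-1) * A - φ₁ (-1) * B + φ₁ (-1 + 1) * C - φ₂ (-1 + 1) * D
    norm_num [m11, m21, h10, h20, hA, hB, hC, hD]
    field_simp
    ring
  · show ξ 0 = φ₂ 0 * A - φ₁ 0 * B + φ₁ (0 + 1) * C - φ₂ (0 + 1) * D
    norm_num [h10, h20, h11, h21, hC, hD]
    field_simp
    ring
  · show ξ 1 = φ₂ 1 * A - φ₁ 1 * B + φ₁ (1 + 1) * C - φ₂ (1 + 1) * D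
    norm_num [h11, h21, t1, t2, hA, hB, hC, hD]
    field_simp
    ring
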